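/- Let T > 0, let r : [0,T] → ℝ be continuous, and let y, ŷ : [0,T] → ℝ be continuously differentiable functions satisfying y'(t) = y(t)² and ŷ'(t) = ŷ(t)² + r(t) for all t ∈ [0,T], with the same initial value y(0) = ŷ(0). Then the error e := y − ŷ satisfies, for every t ∈ [0,T], e(t)² ≤ ∫₀ᵗ r(s)² ds + ∫₀ᵗ (4|ŷ(s)| + 1) e(s)² ds + 2 ∫₀ᵗ |e(s)|³ ds. -/

import Mathlib

open MeasureTheory Real

/-- Stability estimate for the model ODE y' = y² compared with a perturbed
solution ŷ' = ŷ² + r with the same initial datum. -/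
theorem ode_stability_estimate
    (T : ℝ) (hT : 0 < T)
    (r y yhat : ℝ → ℝ)
    (hr : ContinuousOn r (Set.Icc 0 T))
    (hy : ∀ t ∈ Set.Icc (0:ℝ) T, HasDerivAt y ((y t) ^ 2) t)
    (hyhat : ∀ t ∈ Set.Icc (0:ℝ) T, HasDerivAt yhat ((yhat t) ^ 2 + r t) t)
    (hinit : y 0 = yhat 0) :
    ∀ t ∈ Set.Icc (0:ℝ) T,
      (y t - yhat t) ^ 2 ≤
        (∫ s in (0:ℝ)..t, (r s) ^ 2)
          + (∫ s in (0:ℝ)..t, (4 * |yhat s| + 1) * (y s - yhat s) ^ 2)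
          + 2 * ∫ s in (0:ℝ)..t, |y s - yhat s| ^ 3 := by
  intro t ht
  obtain ⟨ht0, htT⟩ := ht
  -- continuity of y, yhat on Icc 0 T
  have hyc : ContinuousOn y (Set.Icc 0 T) := fun s hs =>
    ((hy s hs).continuousAt).continuousWithinAt
  have hyhatc : ContinuousOn yhat (Set.Icc 0 T) := fun s hs =>
    ((hyhat s hs).continuousAt).continuousWithinAt
  have hsub : Set.Icc (0:ℝ) t ⊆ Set.Icc 0 T := Set.Icc_subset_Icc le_rfl htT
  have huIcc : Set.uIcc (0:ℝ) t = Set.Icc 0 t := Set.uIcc_of_le ht0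
  -- derivative of e^2
  set D : ℝ → ℝ := fun s => 2 * (y s - yhat s) * ((y s) ^ 2 - ((yhat s) ^ 2 + r s)) with hD
  have hderiv : ∀ s ∈ Set.uIcc (0:ℝ) t,
      HasDerivAt (fun u => (y u - yhat u) ^ 2) (D s) s := by
    intro s hs
    have hs' : s ∈ Set.Icc (0:ℝ) T := hsub (huIcc ▸ hs)
    have h1 := (hy s hs').sub (hyhat s hs')
    have h2 : HasDerivAt (fun u => (y u - yhat u) ^ 2) _ s := h1.pow 2
    simpa [D, mul_comm, mul_assoc, mul_left_comm] using h2
  have hDcont : ContinuousOn D (Set.Icc 0 T) := by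
    apply ContinuousOn.mul
    · exact (continuousOn_const.mul (hyc.sub hyhatc))
    · exact ((hyc.pow 2).sub ((hyhatc.pow 2).add hr))
  have hDint : IntervalIntegrable D volume 0 t :=
    (hDcont.mono hsub).intervalIntegrable_of_Icc ht0
  have hFTC : ∫ s in (0:ℝ)..t, D s = (y t - yhat t) ^ 2 - (y 0 - yhat 0) ^ 2 :=
    intervalIntegral.integral_eq_sub_of_hasDerivAt hderiv hDint
  have he0 : (y 0 - yhat 0) ^ 2 = 0 := by rw [hinit]; ring
  have hEt : (y t - yhat t) ^ 2 = ∫ s in (0:ℝ)..t, D s := by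
    rw [hFTC, he0, sub_zero]
  -- RHS integrands
  set G : ℝ → ℝ := fun s => (r s) ^ 2 + (4 * |yhat s| + 1) * (y s - yhat s) ^ 2
      + 2 * |y s - yhat s| ^ 3 with hG
  have hec : ContinuousOn (fun s => y s - yhat s) (Set.Icc 0 T) := hyc.sub hyhatc
  have hr2c : ContinuousOn (fun s => (r s) ^ 2) (Set.Icc 0 T) := hr.pow 2
  have hmidc : ContinuousOn (fun s => (4 * |yhat s| + 1) * (y s - yhat s) ^ 2)
      (Set.Icc 0 T) := ((continuousOn_const.mul hyhatc.abs).add continuousOn_const).mul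
        (hec.pow 2)
  have hcubc : ContinuousOn (fun s => |y s - yhat s| ^ 3) (Set.Icc 0 T) := hec.abs.pow 3
  have hr2int : IntervalIntegrable (fun s => (r s) ^ 2) volume 0 t :=
    (hr2c.mono hsub).intervalIntegrable_of_Icc ht0
  have hmidint : IntervalIntegrable (fun s => (4 * |yhat s| + 1) * (y s - yhat s) ^ 2)
      volume 0 t := (hmidc.mono hsub).intervalIntegrable_of_Icc ht0
  have hcubint : IntervalIntegrable (fun s => |y s - yhat s| ^ 3) volume 0 t :=
    (hcubc.mono hsub).intervalIntegrable_of_Icc ht0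
  have hGint : IntervalIntegrable G volume 0 t :=
    (hr2int.add hmidint).add (hcubint.const_mul 2)
  -- pointwise bound
  have hpt : ∀ s ∈ Set.Icc (0:ℝ) t, D s ≤ G s := by
    intro s hs
    have h1 : yhat s ≤ |yhat s| := le_abs_self _
    have h2 : -(yhat s) ≤ |yhat s| := neg_le_abs _
    have h3 : (y s - yhat s) ^ 3 ≤ |y s - yhat s| ^ 3 := by
      calc (y s - yhat s) ^ 3 ≤ |(y s - yhat s) ^ 3| := le_abs_self _
        _ = |y s - yhat s| ^ 3 := abs_pow _ _
    have h4 : (0:ℝ) ≤ |y s - yhat s| := abs_nonneg _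
    have h5 := sq_nonneg (y s - yhat s + r s)
    have h6 := sq_nonneg (y s - yhat s)
    simp only [D, G]
    nlinarith [sq_nonneg (y s - yhat s - r s), mul_nonneg (abs_nonneg (yhat s)) h6]
  have hmono : ∫ s in (0:ℝ)..t, D s ≤ ∫ s in (0:ℝ)..t, G s :=
    intervalIntegral.integral_mono_on ht0 hDint hGint hpt
  have hsplit : ∫ s in (0:ℝ)..t, G s
      = (∫ s in (0:ℝ)..t, (r s) ^ 2)
        + (∫ s in (0:ℝ)..t, (4 * |yhat s| + 1) * (y s - yhat s) ^ 2)
        + 2 * ∫ s in (0:ℝ)..t, |y s - yhat s| ^ 3 := by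
    rw [intervalIntegral.integral_add (hr2int.add hmidint) (hcubint.const_mul 2),
      intervalIntegral.integral_add hr2int hmidint,
      intervalIntegral.integral_const_mul]
  rw [hEt]
  rw [hsplit] at hmono
  exact hmono
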